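/- For every odd prime p, \sum_{k=0}^{p-1} \binom{2k}{k} 4^{-k} \equiv p mod p^2 in Z_p. -/

import Mathlib

open Finset

/-- Closed form for the partial sums, in any commutative ring where `4*u = 1`. -/
lemma sum_central_aux {R : Type*} [CommRing R] (u : R) (h : 4 * u = 1) (n : ℕ) :
    ∑ k ∈ Finset.range (n + 1), ((Nat.choose (2 * k) k : R) * u ^ k)
      = (2 * n + 1) * (Nat.choose (2 * n) n : R) * u ^ n := by
  induction n with
  | zero => simp
  | succ n ih =>
    rw [Finset.sum_range_succ, ih]
    have hc : ((n + 1) * Nat.choose (2 * (n + 1)) (n + 1) : R)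
        = 2 * (2 * n + 1) * (Nat.choose (2 * n) n : R) := by
      have := Nat.succ_mul_centralBinom_succ n
      simp only [Nat.centralBinom] at this
      exact_mod_cast congrArg (Nat.cast : ℕ → R) this
    push_cast at hc ⊢
    linear_combination (-2 * u ^ (n + 1)) * hc +
      (-((2 * (n : R) + 1) * (Nat.choose (2 * n) n : R) * u ^ n)) * h

/-- `choose (2p-1) p ≡ 1 [MOD p]` for prime `p`. -/
lemma choose_two_p_sub_one_mod (p : ℕ) [hp : Fact p.Prime] :
    Nat.choose (2 * p - 1) p ≡ 1 [MOD p] := by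
  have hp1 : 1 ≤ p := hp.out.one_lt.le
  have h := Choose.choose_modEq_choose_mod_mul_choose_div_nat
    (p := p) (n := 2 * p - 1) (k := p)
  have h2 : 2 * p - 1 = p + (p - 1) := by omega
  have hmod : (2 * p - 1) % p = p - 1 := by
    rw [h2, Nat.add_mod_left]; exact Nat.mod_eq_of_lt (by omega)
  have hdiv : (2 * p - 1) / p = 1 := by
    rw [h2, Nat.add_div_left _ (by omega), Nat.div_eq_of_lt (by omega)]
  rw [hmod, hdiv, Nat.mod_self, Nat.div_self (by omega), Nat.choose_zero_right,
    Nat.choose_self, one_mul] at h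
  simpa using h

/-- The key integer divisibility. -/
lemma int_key (p : ℕ) [hp : Fact p.Prime] (hodd : Odd p) :
    (p : ℤ) ^ 2 ∣ (2 * p - 1) * (Nat.choose (2 * (p - 1)) (p - 1) : ℤ) - p * 4 ^ (p - 1) := by
  have hp1 : 1 < p := hp.out.one_lt
  -- (2p-1) * choose (2p-2) (p-1) = p * choose (2p-1) p  (in ℕ)
  have hnat : (2 * p - 1) * Nat.choose (2 * (p - 1)) (p - 1)
      = Nat.choose (2 * p - 1) p * p := by
    have := Nat.add_one_mul_choose_eq (2 * (p - 1)) (p - 1)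
    have e1 : 2 * (p - 1) + 1 = 2 * p - 1 := by omega
    have e2 : p - 1 + 1 = p := by omega
    rw [e1, e2] at this
    exact this
  have hcast : ((2 : ℤ) * p - 1) * (Nat.choose (2 * (p - 1)) (p - 1) : ℤ)
      = (Nat.choose (2 * p - 1) p : ℤ) * p := by
    have : ((2 * p - 1 : ℕ) : ℤ) = 2 * p - 1 := by
      push_cast [Nat.cast_sub (by omega : 1 ≤ 2 * p)]; ring
    rw [← this]
    exact_mod_cast congrArg (Nat.cast : ℕ → ℤ) hnat
  rw [hcast]
  have : (Nat.choose (2 * p - 1) p : ℤ) * p - p * 4 ^ (p - 1)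
      = p * ((Nat.choose (2 * p - 1) p : ℤ) - 4 ^ (p - 1)) := by ring
  rw [this, sq]
  apply mul_dvd_mul_left
  -- p ∣ choose (2p-1) p - 4^(p-1), via ZMod p
  rw [← ZMod.intCast_zmod_eq_zero_iff_dvd]
  push_cast
  have hC : ((Nat.choose (2 * p - 1) p : ℕ) : ZMod p) = 1 := by
    have := (ZMod.natCast_eq_natCast_iff _ _ _).mpr (choose_two_p_sub_one_mod p)
    simpa using this
  have h2 : (2 : ZMod p) ≠ 0 := by
    intro h
    have : ((2 : ℕ) : ZMod p) = 0 := by exact_mod_cast h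
    rw [ZMod.natCast_eq_zero_iff] at this
    have hp2 := (Nat.prime_dvd_prime_iff_eq hp.out Nat.prime_two).mp this
    rw [Nat.odd_iff] at hodd
    omega
  have h4 : (4 : ZMod p) ≠ 0 := by
    have : (4 : ZMod p) = 2 * 2 := by norm_num
    rw [this]; exact mul_ne_zero h2 h2
  rw [hC, ZMod.pow_card_sub_one_eq_one h4]
  ring

theorem stmt_18 (p : ℕ) [Fact p.Prime] (hodd : Odd p) :
    (p : ℤ_[p]) ^ 2 ∣
      (∑ k ∈ Finset.range p,
          ((Nat.choose (2 * k) k : ℤ_[p]) * (Ring.inverse (4 : ℤ_[p])) ^ k))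
        - (p : ℤ_[p]) := by
  have hp : p.Prime := Fact.out
  have hp2 : p ≠ 2 := by rw [Nat.odd_iff] at hodd; omega
  have hu : IsUnit (4 : ℤ_[p]) := by
    rw [PadicInt.isUnit_iff]
    refine le_antisymm (PadicInt.norm_le_one _) ?_
    by_contra hlt
    push_neg at hlt
    have h4e : ((4 : ℤ) : ℤ_[p]) = (4 : ℤ_[p]) := by push_cast; ring
    rw [← h4e, PadicInt.norm_int_lt_one_iff_dvd] at hlt
    have hdvd : p ∣ 4 := by exact_mod_cast hlt
    have : p ∣ 2 := hp.dvd_of_dvd_pow (by simpa using hdvd : p ∣ 2 ^ 2)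
    exact hp2 ((Nat.prime_dvd_prime_iff_eq hp Nat.prime_two).mp this)
  obtain ⟨n, rfl⟩ := Nat.exists_eq_succ_of_ne_zero hp.ne_zero
  simp only [Nat.succ_eq_add_one] at *
  set u := Ring.inverse (4 : ℤ_[n + 1]) with hud
  have h4 : (4 : ℤ_[n + 1]) * u = 1 := Ring.mul_inverse_cancel _ hu
  have h4n : (4 : ℤ_[n + 1]) ^ n * u ^ n = 1 := by
    rw [← mul_pow, h4, one_pow]
  rw [sum_central_aux u h4 n]
  have hZ := int_key (n + 1) hodd
  simp only [Nat.add_sub_cancel] at hZ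
  obtain ⟨c, hc⟩ := hZ
  refine ⟨(c : ℤ_[n + 1]) * u ^ n, ?_⟩
  have hc' := congrArg (fun z : ℤ => (z : ℤ_[n + 1])) hc
  push_cast at hc' ⊢
  linear_combination u ^ n * hc' + ((n : ℤ_[n + 1]) + 1) * h4n
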